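/- Let I₁, …, I_N be pairwise disjoint measurable subsets of [0, ∞), each with finite Lebesgue measure, and let 0 ≤ ε_k ≤ 1 for 1 ≤ k ≤ N. Then for every natural number p, ∑_{k=1}^N ε_k ∫_{I_k} (t^p / p!) e^{−t} dt ≤ 1 − exp(−∑_{k=1}^N ε_k |I_k|). -/

import Mathlib

open MeasureTheory Set

open MeasureTheory Set

lemma f_integrable (p : ℕ) :
    IntegrableOn (fun t : ℝ => t ^ p / (p.factorial : ℝ) * Real.exp (-t)) (Ici 0) := by
  have h := Real.GammaIntegral_convergent (s := p + 1) (by positivity)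
  have h2 : IntegrableOn (fun t : ℝ => t ^ p / (p.factorial : ℝ) * Real.exp (-t)) (Ioi 0) := by
    have := (h.div_const (p.factorial : ℝ))
    refine IntegrableOn.congr_fun this (fun x hx => ?_) measurableSet_Ioi
    rw [add_sub_cancel_right, Real.rpow_natCast]
    ring
  rwa [IntegrableOn, Measure.restrict_congr_set Ioi_ae_eq_Ici] at h2

lemma f_integral (p : ℕ) :
    ∫ t in Ici (0:ℝ), t ^ p / (p.factorial : ℝ) * Real.exp (-t) = 1 := by
  have h := Real.Gamma_eq_integral (s := (p:ℝ) + 1) (by positivity)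
  rw [Real.Gamma_nat_eq_factorial] at h
  rw [integral_Ici_eq_integral_Ioi]
  have : ∫ t in Ioi (0:ℝ), t ^ p / (p.factorial : ℝ) * Real.exp (-t)
      = (∫ x in Ioi (0:ℝ), Real.exp (-x) * x ^ ((p:ℝ) + 1 - 1)) / (p.factorial : ℝ) := by
    rw [← integral_div]
    refine setIntegral_congr_fun measurableSet_Ioi (fun x hx => ?_)
    rw [add_sub_cancel_right, Real.rpow_natCast]
    ring
  rw [this, ← h, div_self (by positivity)]


lemma core_ineq (p : ℕ) (g : ℝ → ℝ) (hmg : Measurable g) (hg0 : ∀ t, 0 ≤ g t)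
    (hg1 : ∀ t, g t ≤ 1) (hgi : Integrable g) :
    Real.exp (-(∫ t, g t)) ≤
      ∫ t in Ici (0:ℝ), (1 - g t) * (t ^ p / (p.factorial : ℝ) * Real.exp (-t)) := by
  set f := fun t : ℝ => t ^ p / (p.factorial : ℝ) * Real.exp (-t) with hfdef
  have hfm : Measurable f := by
    apply Measurable.mul
    · exact (measurable_id.pow_const p).div_const _
    · exact (measurable_id.neg).exp
  have hf0 : ∀ t : ℝ, 0 ≤ t → 0 ≤ f t := fun t ht => by
    simp only [hfdef]; positivity
  set m := ∫ t, g t with hm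
  have hm0 : 0 ≤ m := integral_nonneg hg0
  set G := fun t : ℝ => ∫ s in (0:ℝ)..t, g s with hG
  have hgint : ∀ a b : ℝ, IntervalIntegrable g volume a b := fun a b => hgi.intervalIntegrable
  have hGd : ∀ s t : ℝ, G t - G s = ∫ u in s..t, g u := by
    intro s t
    simp only [hG]
    rw [← intervalIntegral.integral_add_adjacent_intervals (hgint 0 s) (hgint s t)]
    ring
  have hGb : ∀ s t : ℝ, s ≤ t → 0 ≤ G t - G s ∧ G t - G s ≤ t - s := by
    intro s t hst
    rw [hGd s t]
    constructor
    · exact intervalIntegral.integral_nonneg hst (fun u _ => hg0 u)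
    · calc ∫ u in s..t, g u ≤ ∫ u in s..t, (1:ℝ) :=
            intervalIntegral.integral_mono_on hst (hgint s t) intervalIntegrable_const
              (fun u _ => hg1 u)
        _ = t - s := by simp
  set φ := fun t : ℝ => t - G t with hφ
  have hφmono : Monotone φ := by
    intro s t hst
    have := hGb s t hst
    simp only [hφ]
    linarith [this.2]
  have hφ0 : φ 0 = 0 := by simp [hφ, hG]
  have hφcont : Continuous φ := by
    have : LipschitzWith 1 φ := by
      apply LipschitzWith.of_dist_le_mul
      intro x y
      rw [Real.dist_eq, Real.dist_eq, NNReal.coe_one, one_mul]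
      rcases le_total x y with h | h
      · have h1 := hGb x y h
        have e1 : |φ x - φ y| = φ y - φ x := by
          rw [abs_sub_comm]; exact abs_of_nonneg (by simp only [hφ]; linarith [h1.2])
        have e2 : |x - y| = y - x := by
          rw [abs_sub_comm]; exact abs_of_nonneg (by linarith)
        rw [e1, e2]; simp only [hφ]; linarith [h1.1]
      · have h1 := hGb y x h
        have e1 : |φ x - φ y| = φ x - φ y :=
          abs_of_nonneg (by simp only [hφ]; linarith [h1.2])
        have e2 : |x - y| = x - y := abs_of_nonneg (by linarith)
        rw [e1, e2]; simp only [hφ]; linarith [h1.1]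
    exact this.continuous
  have hGle : ∀ t, G t ≤ m := by
    intro t
    rcases le_total t 0 with ht | ht
    · have h1 := hGb t 0 ht
      have h0 : G 0 = 0 := by simp [hG]
      have : G t ≤ 0 := by linarith [h1.1]
      linarith
    · simp only [hG]
      rw [intervalIntegral.integral_of_le ht]
      exact setIntegral_le_integral hgi (Filter.Eventually.of_forall (fun u => hg0 u))
  have hφge : ∀ t, t - m ≤ φ t := fun t => by simp only [hφ]; linarith [hGle t]
  have hG0 : ∀ t, 0 ≤ t → 0 ≤ G t := by
    intro t ht
    have := (hGb 0 t ht).1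
    have h0 : G 0 = 0 := by simp [hG]
    linarith
  have hφle : ∀ t, 0 ≤ t → φ t ≤ t := fun t ht => by simp only [hφ]; linarith [hG0 t ht]
  have hφnn : ∀ t, 0 ≤ t → 0 ≤ φ t := fun t ht => hφ0 ▸ hφmono ht
  have hφm : Measurable φ := hφcont.measurable
  have hsurj : ∀ a, 0 ≤ a → ∃ t, 0 ≤ t ∧ φ t = a := by
    intro a ha
    have hmem : a ∈ Icc (φ 0) (φ (a + m)) := ⟨by rw [hφ0]; exact ha, by linarith [hφge (a + m)]⟩
    obtain ⟨t, ht, hφt⟩ := intermediate_value_Icc (by linarith : (0:ℝ) ≤ a + m)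
      hφcont.continuousOn hmem
    exact ⟨t, ht.1, hφt⟩
  -- measure part
  set μ := volume.restrict (Ici (0:ℝ)) with hμdef
  set dens := fun t : ℝ => ENNReal.ofReal (1 - g t) with hdens
  have hdm : Measurable dens := (measurable_const.sub hmg).ennreal_ofReal
  set ν := μ.withDensity dens with hν
  have hνIic : ∀ t : ℝ, 0 ≤ t → ν (Iic t) = ENNReal.ofReal (φ t) := by
    intro t ht
    rw [hν, withDensity_apply _ measurableSet_Iic, hμdef,
      Measure.restrict_restrict measurableSet_Iic]
    have hset : Iic t ∩ Ici (0:ℝ) = Icc 0 t := by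
      rw [Set.inter_comm]; exact Set.Ici_inter_Iic
    rw [hset]
    have hint : IntegrableOn (fun s => 1 - g s) (Icc (0:ℝ) t) :=
      (integrableOn_const measure_Icc_lt_top.ne).sub hgi.integrableOn
    have hnn : 0 ≤ᵐ[volume.restrict (Icc (0:ℝ) t)] fun s => 1 - g s :=
      Filter.Eventually.of_forall (fun s => by simp only [Pi.zero_apply]; linarith [hg1 s])
    rw [← ofReal_integral_eq_lintegral_ofReal hint hnn]
    congr 1
    rw [MeasureTheory.integral_Icc_eq_integral_Ioc, ← intervalIntegral.integral_of_le ht,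
      intervalIntegral.integral_sub intervalIntegrable_const (hgint 0 t),
      intervalIntegral.integral_const]
    simp only [hφ, hG, smul_eq_mul, mul_one, sub_zero]
  have hlevmeas : ∀ a : ℝ, MeasurableSet {t : ℝ | φ t ≤ a} := fun a =>
    hφm measurableSet_Iic
  have hνlevel : ∀ a : ℝ, ν {t : ℝ | φ t ≤ a} = ENNReal.ofReal a := by
    intro a
    rcases lt_or_ge a 0 with ha | ha
    · have hsub : {t : ℝ | φ t ≤ a} ⊆ Iio 0 := by
        intro t ht
        by_contra h
        simp only [Set.mem_Iio, not_lt] at h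
        exact absurd (le_trans (hφnn t h) ht) (not_le.2 ha)
      have hz : ν (Iio 0) = 0 := by
        rw [hν, withDensity_apply _ measurableSet_Iio, hμdef,
          Measure.restrict_restrict measurableSet_Iio]
        have : Iio (0:ℝ) ∩ Ici 0 = ∅ := by
          ext x; simp only [Set.mem_inter_iff, Set.mem_Iio, Set.mem_Ici, Set.mem_empty_iff_false,
            iff_false, not_and, not_le]
          intro h; exact h
        rw [this]; simp
      rw [ENNReal.ofReal_eq_zero.2 ha.le]
      exact le_antisymm (le_trans (measure_mono hsub) hz.le) (zero_le')
    · apply le_antisymm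
      · apply ENNReal.le_of_forall_pos_le_add
        intro ε hε _
        obtain ⟨t, ht0, hφt⟩ := hsurj (a + ε) (by positivity)
        have hsub : {s : ℝ | φ s ≤ a} ⊆ Iic t := by
          intro s hs
          by_contra h
          simp only [Set.mem_Iic, not_le] at h
          have h2 := hφmono h.le
          rw [hφt] at h2
          have h3 : (0:ℝ) < ε := hε
          have : φ s ≤ a := hs
          linarith
        calc ν {s : ℝ | φ s ≤ a} ≤ ν (Iic t) := measure_mono hsub
          _ = ENNReal.ofReal (a + ε) := by rw [hνIic t ht0, hφt]
          _ = ENNReal.ofReal a + ε := by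
              rw [ENNReal.ofReal_add ha ε.coe_nonneg, ENNReal.ofReal_coe_nnreal]
      · obtain ⟨t, ht0, hφt⟩ := hsurj a ha
        have hsub : Iic t ⊆ {s : ℝ | φ s ≤ a} := fun s hs => by
          have := hφmono (hs : s ≤ t)
          simpa [hφt] using this
        calc ENNReal.ofReal a = ν (Iic t) := by rw [hνIic t ht0, hφt]
          _ ≤ ν {s : ℝ | φ s ≤ a} := measure_mono hsub
  have hmap : Measure.map φ ν = μ := by
    refine (Measure.ext_of_Ioc' μ (Measure.map φ ν) (fun a b hab => ?_) (fun a b hab => ?_)).symm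
    · refine ne_of_lt (lt_of_le_of_lt (Measure.restrict_apply_le _ _) ?_)
      rw [Real.volume_Ioc]
      exact ENNReal.ofReal_lt_top
    · have hpre : φ ⁻¹' (Ioc a b) = {t : ℝ | φ t ≤ b} \ {t : ℝ | φ t ≤ a} := by
        ext t
        simp only [Set.mem_preimage, Set.mem_Ioc, Set.mem_diff, Set.mem_setOf_eq, not_le]
        tauto
      have hsub2 : {t : ℝ | φ t ≤ a} ⊆ {t : ℝ | φ t ≤ b} := fun t ht =>
        le_trans ht hab.le
      rw [Measure.map_apply hφm measurableSet_Ioc, hpre,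
        measure_diff hsub2 (hlevmeas a).nullMeasurableSet
          (by rw [hνlevel]; exact ENNReal.ofReal_ne_top),
        hνlevel, hνlevel, hμdef, Measure.restrict_apply measurableSet_Ioc]
      rcases le_or_gt 0 a with ha | ha
      · have : Ioc a b ∩ Ici (0:ℝ) = Ioc a b := by
          rw [Set.inter_eq_left]
          exact fun x hx => le_trans ha hx.1.le
        rw [this, Real.volume_Ioc, ENNReal.ofReal_sub b ha]
      · have : Ioc a b ∩ Ici (0:ℝ) = Icc 0 b := by
          ext x
          simp only [Set.mem_inter_iff, Set.mem_Ioc, Set.mem_Ici, Set.mem_Icc]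
          constructor
          · rintro ⟨⟨_, h2⟩, h3⟩; exact ⟨h3, h2⟩
          · rintro ⟨h1, h2⟩; exact ⟨⟨lt_of_lt_of_le ha h1, h2⟩, h1⟩
        rw [this, Real.volume_Icc, ENNReal.ofReal_eq_zero.2 ha.le]
        simp
  have hfi : Integrable f μ := f_integrable p
  have hfae : 0 ≤ᵐ[μ] f := by
    rw [hμdef]
    exact (ae_restrict_iff' measurableSet_Ici).2
      (Filter.Eventually.of_forall (fun t ht => hf0 t ht))
  have key1 : ∫⁻ t, ENNReal.ofReal (f t) ∂μ = 1 := by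
    rw [← ofReal_integral_eq_lintegral_ofReal hfi hfae]
    have : ∫ t, f t ∂μ = 1 := f_integral p
    rw [this, ENNReal.ofReal_one]
  have key2 : ∫⁻ t, ENNReal.ofReal (f (φ t)) * dens t ∂μ = 1 := by
    calc ∫⁻ t, ENNReal.ofReal (f (φ t)) * dens t ∂μ
        = ∫⁻ t, dens t * ENNReal.ofReal (f (φ t)) ∂μ := by
          simp only [mul_comm]
      _ = ∫⁻ t, ENNReal.ofReal (f (φ t)) ∂ν := by
          have hcm : Measurable fun t : ℝ => ENNReal.ofReal (f (φ t)) :=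
            (hfm.comp hφm).ennreal_ofReal
          rw [hν, lintegral_withDensity_eq_lintegral_mul μ hdm hcm]
          rfl
      _ = ∫⁻ x, ENNReal.ofReal (f x) ∂(Measure.map φ ν) :=
          (lintegral_map hfm.ennreal_ofReal hφm).symm
      _ = 1 := by rw [hmap]; exact key1
  have hpoint : ∀ t : ℝ, 0 ≤ t → Real.exp (-m) * f (φ t) ≤ f t := by
    intro t ht
    have hφt1 : 0 ≤ φ t := hφnn t ht
    have hφt2 : φ t ≤ t := hφle t ht
    have hGm : t - φ t ≤ m := by simp only [hφ]; linarith [hGle t]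
    have e1 : Real.exp (-m) * Real.exp (-(φ t)) ≤ Real.exp (-t) := by
      rw [← Real.exp_add]
      exact Real.exp_le_exp.2 (by linarith)
    have hp : φ t ^ p ≤ t ^ p := pow_le_pow_left₀ hφt1 hφt2 p
    have e2 : φ t ^ p / (p.factorial : ℝ) ≤ t ^ p / (p.factorial : ℝ) := by gcongr
    calc Real.exp (-m) * f (φ t)
        = (φ t ^ p / (p.factorial : ℝ)) * (Real.exp (-m) * Real.exp (-(φ t))) := by
          simp only [hfdef]; ring
      _ ≤ (t ^ p / (p.factorial : ℝ)) * Real.exp (-t) := by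
          apply mul_le_mul e2 e1 (by positivity) (by positivity)
      _ = f t := by simp only [hfdef]
  have key3 : ENNReal.ofReal (Real.exp (-m)) ≤ ∫⁻ t, ENNReal.ofReal ((1 - g t) * f t) ∂μ := by
    have hmeas2 : Measurable fun t => ENNReal.ofReal (f (φ t)) * dens t :=
      ((hfm.comp hφm).ennreal_ofReal).mul hdm
    calc ENNReal.ofReal (Real.exp (-m))
        = ENNReal.ofReal (Real.exp (-m)) * ∫⁻ t, ENNReal.ofReal (f (φ t)) * dens t ∂μ := by
          rw [key2, mul_one]
      _ = ∫⁻ t, ENNReal.ofReal (Real.exp (-m)) * (ENNReal.ofReal (f (φ t)) * dens t) ∂μ :=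
          (lintegral_const_mul _ hmeas2).symm
      _ ≤ ∫⁻ t, ENNReal.ofReal ((1 - g t) * f t) ∂μ := by
          apply lintegral_mono_ae
          rw [hμdef]
          refine (ae_restrict_iff' measurableSet_Ici).2
            (Filter.Eventually.of_forall (fun t ht => ?_))
          have h1 : Real.exp (-m) * f (φ t) ≤ f t := hpoint t ht
          have hgt : 0 ≤ 1 - g t := by linarith [hg1 t]
          have hfφ0 : 0 ≤ f (φ t) := hf0 _ (hφnn t ht)
          calc ENNReal.ofReal (Real.exp (-m)) * (ENNReal.ofReal (f (φ t)) * dens t)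
              = ENNReal.ofReal (Real.exp (-m) * (f (φ t) * (1 - g t))) := by
                rw [hdens, ← ENNReal.ofReal_mul hfφ0, ← ENNReal.ofReal_mul (Real.exp_nonneg _)]
            _ ≤ ENNReal.ofReal ((1 - g t) * f t) := by
                apply ENNReal.ofReal_le_ofReal
                calc Real.exp (-m) * (f (φ t) * (1 - g t))
                    = (Real.exp (-m) * f (φ t)) * (1 - g t) := by ring
                  _ ≤ f t * (1 - g t) := mul_le_mul_of_nonneg_right h1 hgt
                  _ = (1 - g t) * f t := by ring
  have hint2 : Integrable (fun t => (1 - g t) * f t) μ := by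
    refine Integrable.mono hfi (((measurable_const.sub hmg).mul hfm).aestronglyMeasurable) ?_
    refine Filter.Eventually.of_forall (fun t => ?_)
    rw [norm_mul]
    have hb : ‖1 - g t‖ ≤ 1 := by
      rw [Real.norm_eq_abs, abs_le]
      constructor <;> linarith [hg0 t, hg1 t]
    calc ‖1 - g t‖ * ‖f t‖ ≤ 1 * ‖f t‖ := mul_le_mul_of_nonneg_right hb (norm_nonneg _)
      _ = ‖f t‖ := one_mul _
  have hae2 : 0 ≤ᵐ[μ] fun t => (1 - g t) * f t := by
    rw [hμdef]
    refine (ae_restrict_iff' measurableSet_Ici).2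
      (Filter.Eventually.of_forall (fun t ht => ?_))
    exact mul_nonneg (by linarith [hg1 t]) (hf0 t ht)
  have key4 : ∫⁻ t, ENNReal.ofReal ((1 - g t) * f t) ∂μ
      = ENNReal.ofReal (∫ t, (1 - g t) * f t ∂μ) :=
    (ofReal_integral_eq_lintegral_ofReal hint2 hae2).symm
  have final : ENNReal.ofReal (Real.exp (-m)) ≤ ENNReal.ofReal (∫ t, (1 - g t) * f t ∂μ) :=
    key4 ▸ key3
  rw [ENNReal.ofReal_le_ofReal_iff (integral_nonneg_of_ae hae2)] at final
  exact final

/-- For pairwise disjoint measurable sets `I₁, …, I_N ⊆ [0, ∞)` of finite Lebesgue measure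
and weights `0 ≤ ε_k ≤ 1`, for every `p ∈ ℕ`,
`∑_k ε_k ∫_{I_k} (t^p/p!) e^{−t} dt ≤ 1 − exp(−∑_k ε_k |I_k|)`. -/
theorem sum_weighted_integral_le
    (N : ℕ) (I : Fin N → Set ℝ)
    (hmeas : ∀ k, MeasurableSet (I k)) (hsub : ∀ k, I k ⊆ Set.Ici 0)
    (hfin : ∀ k, volume (I k) ≠ ⊤)
    (hdisj : Pairwise (Function.onFun Disjoint I))
    (ε : Fin N → ℝ) (hε0 : ∀ k, 0 ≤ ε k) (hε1 : ∀ k, ε k ≤ 1) (p : ℕ) :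
    ∑ k, ε k * ∫ t in I k, t ^ p / (p.factorial : ℝ) * Real.exp (-t)
      ≤ 1 - Real.exp (-∑ k, ε k * (volume (I k)).toReal) := by
  set f := fun t : ℝ => t ^ p / (p.factorial : ℝ) * Real.exp (-t) with hfdef
  set g := fun t : ℝ => ∑ k, Set.indicator (I k) (fun _ => ε k) t with hgdef
  have hmg : Measurable g := by
    apply Finset.measurable_sum
    intro k _
    exact (measurable_const (a := ε k)).indicator (hmeas k)
  have hg0 : ∀ t, 0 ≤ g t := fun t =>
    Finset.sum_nonneg fun k _ => Set.indicator_nonneg (fun _ _ => hε0 k) t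
  have hg1 : ∀ t, g t ≤ 1 := by
    intro t
    by_cases h : ∃ j, t ∈ I j
    · obtain ⟨j, hj⟩ := h
      have hgt : g t = ε j := by
        simp only [hgdef]
        rw [Finset.sum_eq_single j]
        · exact Set.indicator_of_mem hj _
        · intro k _ hk
          exact Set.indicator_of_notMem
            (fun hkt => Set.disjoint_left.1 (hdisj hk) hkt hj) _
        · intro h; exact absurd (Finset.mem_univ j) h
      rw [hgt]; exact hε1 j
    · push_neg at h
      have hgt : g t = 0 := Finset.sum_eq_zero fun k _ => Set.indicator_of_notMem (h k) _
      rw [hgt]; exact zero_le_one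
  have hik : ∀ k, Integrable (fun t => Set.indicator (I k) (fun _ => ε k) t) := by
    intro k
    rw [integrable_indicator_iff (hmeas k)]
    exact integrableOn_const (hfin k)
  have hgi : Integrable g := integrable_finset_sum _ fun k _ => hik k
  have hm : ∫ t, g t = ∑ k, ε k * (volume (I k)).toReal := by
    rw [hgdef]
    rw [integral_finset_sum _ fun k _ => hik k]
    refine Finset.sum_congr rfl fun k _ => ?_
    rw [integral_indicator_const _ (hmeas k)]
    simp [mul_comm]
    exact Or.inl rfl
  -- integrability of g * f and indicator * f on μ
  have hfm : Measurable f := by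
    apply Measurable.mul
    · exact (measurable_id.pow_const p).div_const _
    · exact (measurable_id.neg).exp
  have hgf : Integrable (fun t => g t * f t) (volume.restrict (Set.Ici 0)) := by
    refine Integrable.mono (f_integrable p) ((hmg.mul hfm).aestronglyMeasurable) ?_
    refine Filter.Eventually.of_forall (fun t => ?_)
    rw [norm_mul]
    have hb : ‖g t‖ ≤ 1 := by
      rw [Real.norm_eq_abs, abs_le]; constructor <;> linarith [hg0 t, hg1 t]
    calc ‖g t‖ * ‖f t‖ ≤ 1 * ‖f t‖ := mul_le_mul_of_nonneg_right hb (norm_nonneg _)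
      _ = ‖f t‖ := one_mul _
  have hsum : ∫ t in Set.Ici 0, g t * f t = ∑ k, ε k * ∫ t in I k, f t := by
    have hptw : ∀ t, g t * f t = ∑ k, Set.indicator (I k) (fun s => ε k * f s) t := by
      intro t
      rw [hgdef]
      rw [Finset.sum_mul]
      refine Finset.sum_congr rfl fun k _ => ?_
      by_cases h : t ∈ I k
      · rw [Set.indicator_of_mem h, Set.indicator_of_mem h]
      · rw [Set.indicator_of_notMem h, Set.indicator_of_notMem h, zero_mul]
    have hiint : ∀ k : Fin N, Integrable (fun t => Set.indicator (I k) (fun s => ε k * f s) t)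
        (volume.restrict (Set.Ici 0)) := by
      intro k
      rw [integrable_indicator_iff (hmeas k)]
      rw [IntegrableOn, Measure.restrict_restrict (hmeas k), Set.inter_eq_left.2 (hsub k)]
      exact (((f_integrable p).mono_set (hsub k))).const_mul (ε k)
    simp_rw [hptw]
    rw [integral_finset_sum _ fun k _ => hiint k]
    refine Finset.sum_congr rfl fun k _ => ?_
    rw [integral_indicator (hmeas k), Measure.restrict_restrict (hmeas k),
      Set.inter_eq_left.2 (hsub k), integral_const_mul]
  have hcore := core_ineq p g hmg hg0 hg1 hgi
  have hsplit : ∫ t in Set.Ici 0, (1 - g t) * f t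
      = 1 - ∫ t in Set.Ici 0, g t * f t := by
    have : ∀ t : ℝ, (1 - g t) * f t = f t - g t * f t := fun t => by ring
    simp_rw [this]
    rw [integral_sub (f_integrable p) hgf, f_integral p]
  rw [hsplit, hm] at hcore
  rw [← hsum] at *
  linarith [hcore]
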